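/- Let ψ ∈ ℝ^N satisfy M⁻¹(−Δ)ψ = ω² ψ with ω > 0 (free boundary conditions). Then ψ̃ := ω⁻¹ ∇₊ψ ∈ ℝ^{N−1} satisfies −(∇₊ M⁻¹ ∇₋) ψ̃ = ω² ψ̃, where (∇₋v)_x = v_x − v_{x−1} for 1 ≤ x ≤ N with the convention v_0 = v_N = 0. Moreover, if {ψ^k}_{0≤k≤N−1} is a family with M⁻¹(−Δ)ψ^k = ω_k² ψ^k, ⟨ψ^j, Mψ^k⟩ = δ_{jk}, ω_0 = 0 and ω_k > 0 for k ≥ 1, then {ω_k^{−1}∇₊ψ^k}_{1≤k≤N−1} is an orthonormal basis of ℝ^{N−1} for the standard inner product. -/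

import Mathlib

open Finset

lemma icc_sum_range (n : ℕ) (f : ℕ → ℝ) :
    ∑ x ∈ Icc 1 n, f x = ∑ i ∈ range n, f (i + 1) := by
  rw [← Finset.Ico_add_one_right_eq_Icc, Finset.sum_Ico_eq_sum_range]
  simp only [Nat.add_sub_cancel]
  exact Finset.sum_congr rfl fun i _ => by rw [Nat.add_comm]

lemma sbp_aux (n : ℕ) (m ψj ψk : ℕ → ℝ) (Wk : ℝ)
    (hbc0 : ψk 0 = ψk 1) (hbcN : ψk (n + 2) = ψk (n + 1))
    (heig : ∀ x, 1 ≤ x → x ≤ n + 1 →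
      -(ψk (x + 1) - 2 * ψk x + ψk (x - 1)) = Wk ^ 2 * (m x * ψk x)) :
    ∑ x ∈ Icc 1 n, (ψj (x + 1) - ψj x) * (ψk (x + 1) - ψk x)
      = Wk ^ 2 * ∑ x ∈ Icc 1 (n + 1), m x * ψj x * ψk x := by
  rw [icc_sum_range, icc_sum_range, Finset.mul_sum]
  have hrhs : ∀ i ∈ range (n + 1), Wk ^ 2 * (m (i + 1) * ψj (i + 1) * ψk (i + 1))
      = ψj (i + 1) * (ψk (i + 1) - ψk i) - ψj (i + 1 + 1) * (ψk (i + 1 + 1) - ψk (i + 1))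
        + (ψj (i + 1 + 1) - ψj (i + 1)) * (ψk (i + 1 + 1) - ψk (i + 1)) := by
    intro i hi
    have h := heig (i + 1) (by omega) (by simp at hi; omega)
    simp only [Nat.add_sub_cancel] at h
    linear_combination (-ψj (i + 1)) * h
  rw [Finset.sum_congr rfl hrhs]
  simp only [Finset.sum_add_distrib, Finset.sum_sub_distrib]
  rw [Finset.sum_range_succ' (fun i => ψj (i + 1) * (ψk (i + 1) - ψk i)) n,
      Finset.sum_range_succ (fun i => ψj (i + 1 + 1) * (ψk (i + 1 + 1) - ψk (i + 1))) n,
      Finset.sum_range_succ (fun i => (ψj (i + 1 + 1) - ψj (i + 1)) * (ψk (i + 1 + 1) - ψk (i + 1))) n]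
  have h0 : ψk 1 - ψk 0 = 0 := by rw [hbc0]; ring
  have h2 : ψk (n + 1 + 1) - ψk (n + 1) = 0 := by
    rw [show n + 1 + 1 = n + 2 from rfl, hbcN]; ring
  simp only [h0, h2, mul_zero, zero_add, add_zero, Nat.zero_add, sub_zero]
  ring

lemma complete_aux (N : ℕ) (hN : 2 ≤ N) (Ψ : ℕ → ℕ → ℝ) (W : ℕ → ℝ)
    (ho : ∀ j : ℕ, 1 ≤ j → j ≤ N - 1 → ∀ k : ℕ, 1 ≤ k → k ≤ N - 1 →
      (∑ x ∈ Finset.Icc 1 (N - 1),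
        ((Ψ j (x + 1) - Ψ j x) / W j) * ((Ψ k (x + 1) - Ψ k x) / W k))
        = if j = k then 1 else 0) :
    ∀ v : ℕ → ℝ, ∀ x : ℕ, 1 ≤ x → x ≤ N - 1 →
      v x = ∑ k ∈ Finset.Icc 1 (N - 1),
        (∑ y ∈ Finset.Icc 1 (N - 1), ((Ψ k (y + 1) - Ψ k y) / W k) * v y)
          * ((Ψ k (x + 1) - Ψ k x) / W k) := by
  set φ : ℕ → ℕ → ℝ := fun k x => (Ψ k (x + 1) - Ψ k x) / W k with hφ
  let A : Matrix (Fin (N - 1)) (Fin (N - 1)) ℝ := fun k x => φ (k.val + 1) (x.val + 1)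
  have hfin : ∀ f : ℕ → ℝ, ∑ x ∈ Icc 1 (N - 1), f x = ∑ i : Fin (N - 1), f (i.val + 1) := by
    intro f
    rw [icc_sum_range, ← Fin.sum_univ_eq_sum_range]
  have hAAT : A * A.transpose = 1 := by
    ext i j
    have h := ho (i.val + 1) (by omega) (by omega) (j.val + 1) (by omega) (by omega)
    rw [hfin] at h
    simp only [Matrix.mul_apply, Matrix.transpose_apply, Matrix.one_apply]
    rw [show ((∑ x : Fin (N-1), A i x * A j x) = if i = j then (1:ℝ) else 0) ↔ True from ?_]
    · trivial
    · constructor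
      · intro _; trivial
      · intro _
        rw [show (∑ x : Fin (N-1), A i x * A j x)
            = ∑ x : Fin (N-1), φ (i.val + 1) (x.val + 1) * φ (j.val + 1) (x.val + 1) from rfl, h]
        have : (i.val + 1 = j.val + 1) ↔ (i = j) := by
          constructor
          · intro hh; exact Fin.ext (by omega)
          · intro hh; rw [hh]
        simp [this, Fin.val_inj]
  have hATA : A.transpose * A = 1 := mul_eq_one_comm.mp hAAT
  have key : ∀ a b : Fin (N - 1),
      (∑ k : Fin (N - 1), A k a * A k b) = if a = b then 1 else 0 := by
    intro a b
    have := congrFun (congrFun hATA a) b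
    simpa [Matrix.mul_apply, Matrix.transpose_apply, Matrix.one_apply] using this
  intro v x hx1 hx2
  have hx0 : x - 1 < N - 1 := by omega
  set x0 : Fin (N - 1) := ⟨x - 1, hx0⟩ with hx0'
  have hxv : x0.val + 1 = x := by simp [hx0']; omega
  have hstart : v x = ∑ b : Fin (N - 1), (if b = x0 then 1 else 0) * v (b.val + 1) := by
    simp [ite_mul, hxv]
  have htarget : (∑ k ∈ Finset.Icc 1 (N - 1),
        (∑ y ∈ Finset.Icc 1 (N - 1), ((Ψ k (y + 1) - Ψ k y) / W k) * v y)
          * ((Ψ k (x + 1) - Ψ k x) / W k))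
      = ∑ k : Fin (N - 1), (∑ b : Fin (N - 1), A k b * v (b.val + 1)) * A k x0 := by
    rw [hfin]
    refine Finset.sum_congr rfl fun k _ => ?_
    rw [hfin]
    have hAx : ((Ψ (k.val + 1) (x + 1) - Ψ (k.val + 1) x) / W (k.val + 1)) = A k x0 := by
      rw [← hxv]
    rw [hAx]
  rw [htarget, hstart]
  calc ∑ b : Fin (N - 1), (if b = x0 then 1 else 0) * v (b.val + 1)
      = ∑ b : Fin (N - 1), (∑ k : Fin (N - 1), A k b * A k x0) * v (b.val + 1) := by
        refine Finset.sum_congr rfl fun b _ => by rw [key]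
    _ = ∑ b : Fin (N - 1), ∑ k : Fin (N - 1), A k b * v (b.val + 1) * A k x0 := by
        refine Finset.sum_congr rfl fun b _ => ?_
        rw [Finset.sum_mul]
        exact Finset.sum_congr rfl fun k _ => by ring
    _ = ∑ k : Fin (N - 1), ∑ b : Fin (N - 1), A k b * v (b.val + 1) * A k x0 :=
        Finset.sum_comm
    _ = ∑ k : Fin (N - 1), (∑ b : Fin (N - 1), A k b * v (b.val + 1)) * A k x0 := by
        refine Finset.sum_congr rfl fun k _ => (Finset.sum_mul _ _ _).symm


/-- Eigenmodes of the operator `M⁻¹(−Δ)` with free boundary conditions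
(`ψ_0 = ψ_1`, `ψ_{N+1} = ψ_N`), normalized by `⟨ψ^j, Mψ^k⟩ = δ_{jk}`, with `ω_0 = 0` and
`ω_k > 0` for `1 ≤ k ≤ N−1`. -/
def IsEigenSystem (N : ℕ) (m : ℕ → ℝ) (ψ : ℕ → ℕ → ℝ) (W : ℕ → ℝ) : Prop :=
  (∀ k ≤ N - 1, ψ k 0 = ψ k 1 ∧ ψ k (N + 1) = ψ k N) ∧
  (∀ k ≤ N - 1, ∀ x : ℕ, 1 ≤ x → x ≤ N →
    -(ψ k (x + 1) - 2 * ψ k x + ψ k (x - 1)) = (W k) ^ 2 * (m x * ψ k x)) ∧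
  (∀ j ≤ N - 1, ∀ k ≤ N - 1,
    (∑ x ∈ Finset.Icc 1 N, m x * ψ j x * ψ k x) = if j = k then 1 else 0) ∧
  W 0 = 0 ∧ (∀ k : ℕ, 1 ≤ k → k ≤ N - 1 → 0 < W k)

/-- if `M⁻¹(−Δ)ψ = ω²ψ` with `ω > 0` (free boundary conditions), then
`ψ̃ = ω⁻¹∇₊ψ` satisfies `−(∇₊M⁻¹∇₋)ψ̃ = ω²ψ̃` (with `ψ̃_0 = ψ̃_N = 0`); moreover for a full
orthonormal family `{ψ^k}`, the vectors `{ω_k⁻¹∇₊ψ^k}_{1≤k≤N−1}` form an orthonormal basis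
of `ℝ^{N−1}`. -/
theorem stmt13 (N : ℕ) (hN : 2 ≤ N) (m : ℕ → ℝ) (hm : ∀ x, 0 < m x)
    (ψ : ℕ → ℝ) (ω : ℝ) (hω : 0 < ω)
    (hbc0 : ψ 0 = ψ 1) (hbcN : ψ (N + 1) = ψ N)
    (heig : ∀ x : ℕ, 1 ≤ x → x ≤ N →
      -(ψ (x + 1) - 2 * ψ x + ψ (x - 1)) = ω ^ 2 * (m x * ψ x))
    (ψt : ℕ → ℝ)
    (hψt : ∀ x : ℕ, ψt x = if 1 ≤ x ∧ x ≤ N - 1 then (ψ (x + 1) - ψ x) / ω else 0) :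
    (∀ x : ℕ, 1 ≤ x → x ≤ N - 1 →
      -((ψt (x + 1) - ψt x) / m (x + 1) - (ψt x - ψt (x - 1)) / m x) = ω ^ 2 * ψt x) ∧
    (∀ (Ψ : ℕ → ℕ → ℝ) (W : ℕ → ℝ), IsEigenSystem N m Ψ W →
      -- orthonormality of `{ω_k⁻¹∇₊Ψ^k}_{1≤k≤N−1}`
      ((∀ j : ℕ, 1 ≤ j → j ≤ N - 1 → ∀ k : ℕ, 1 ≤ k → k ≤ N - 1 →
        (∑ x ∈ Finset.Icc 1 (N - 1),
          ((Ψ j (x + 1) - Ψ j x) / W j) * ((Ψ k (x + 1) - Ψ k x) / W k))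
          = if j = k then 1 else 0) ∧
      -- completeness: every vector of `ℝ^{N−1}` is the sum of its mode components
      (∀ v : ℕ → ℝ, ∀ x : ℕ, 1 ≤ x → x ≤ N - 1 →
        v x = ∑ k ∈ Finset.Icc 1 (N - 1),
          (∑ y ∈ Finset.Icc 1 (N - 1), ((Ψ k (y + 1) - Ψ k y) / W k) * v y)
            * ((Ψ k (x + 1) - Ψ k x) / W k)))) := by
  constructor
  · -- the transformed eigenvector equation
    have hd : ∀ y, y ≤ N → ψt y = (ψ (y + 1) - ψ y) / ω := by
      intro y hy
      rw [hψt]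
      split_ifs with h
      · rfl
      · have : y = 0 ∨ y = N := by omega
        rcases this with rfl | rfl
        · rw [← hbc0]; simp
        · rw [hbcN]; simp
    intro x hx1 hx2
    rw [hd (x + 1) (by omega), hd x (by omega), hd (x - 1) (by omega),
        show x - 1 + 1 = x by omega]
    have e1 := heig x hx1 (by omega)
    have e2 := heig (x + 1) (by omega) (by omega)
    simp only [Nat.add_sub_cancel] at e2
    have hm1 := (hm x).ne'
    have hm2 := (hm (x + 1)).ne'
    have hω' := hω.ne'
    have E2 : (ψ (x + 1 + 1) - ψ (x + 1)) / ω - (ψ (x + 1) - ψ x) / ω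
        = -(ω * (m (x + 1) * ψ (x + 1))) := by
      field_simp
      linear_combination -e2
    have E1 : (ψ (x + 1) - ψ x) / ω - (ψ x - ψ (x - 1)) / ω
        = -(ω * (m x * ψ x)) := by
      field_simp
      linear_combination -e1
    rw [E2, E1]
    field_simp
    ring
  · -- orthonormal basis
    intro Ψ W hE
    obtain ⟨hbc, heig', horth, hW0, hWpos⟩ := hE
    have ho : ∀ j : ℕ, 1 ≤ j → j ≤ N - 1 → ∀ k : ℕ, 1 ≤ k → k ≤ N - 1 →
        (∑ x ∈ Finset.Icc 1 (N - 1),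
          ((Ψ j (x + 1) - Ψ j x) / W j) * ((Ψ k (x + 1) - Ψ k x) / W k))
          = if j = k then 1 else 0 := by
      intro j hj1 hj2 k hk1 hk2
      have hWj := (hWpos j hj1 hj2).ne'
      have hWk := (hWpos k hk1 hk2).ne'
      have step : (∑ x ∈ Finset.Icc 1 (N - 1),
          ((Ψ j (x + 1) - Ψ j x) / W j) * ((Ψ k (x + 1) - Ψ k x) / W k))
          = (W j * W k)⁻¹
            * ∑ x ∈ Icc 1 (N - 1), (Ψ j (x + 1) - Ψ j x) * (Ψ k (x + 1) - Ψ k x) := by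
        rw [Finset.mul_sum]
        exact Finset.sum_congr rfl fun x _ => by field_simp
      have hbck := hbc k hk2
      have hsb := sbp_aux (N - 1) m (Ψ j) (Ψ k) (W k) hbck.1
        (by rw [show N - 1 + 2 = N + 1 by omega, show N - 1 + 1 = N by omega]; exact hbck.2)
        (by intro x h1 h2; exact heig' k hk2 x h1 (by omega))
      rw [show N - 1 + 1 = N by omega] at hsb
      rw [step, hsb, horth j hj2 k hk2]
      by_cases h : j = k
      · subst h
        simp only [if_pos rfl, mul_one]
        field_simp
      · simp [h]
    exact ⟨ho, complete_aux N hN Ψ W ho⟩
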